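/- On the polynomial algebra Loc in variables x^i (i = 1,...,n) and u^a_I (a = 1,...,k, I a multi-index), the Euler-Lagrange operator δ/δu^a defined by δL/δu^a = Σ_I (-D)_I (∂L/∂u^a_I), where D_i = ∂/∂x^i + Σ u^a_{Ii} ∂/∂u^a_I are the total derivatives, annihilates total divergences: for all local functions R^i, δ(D_i R^i)/δu^a = 0 for every a. -/
import Mathlib


/-!
STATEMENT 4.  `Loc n F` is the algebra of (polynomial) local functions in the
base coordinates `x^i` (`i : Fin n`) and the jet coordinates `u^a_I`
(`a : F`, `I` a symmetric multi-index, i.e. a multiset of base indices).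
`Dtot i` is the total derivative `D_i = ∂/∂x^i + Σ u^a_{Ii} ∂/∂u^a_I`,
`DI I` is the composite `D_I`, and the Euler–Lagrange operator is
`δL/δu^a = Σ_I (-D)_I (∂L/∂u^a_I)`.  The theorem: the Euler–Lagrange
operator annihilates total divergences `D_i R^i`.
-/

open MvPolynomial

/-- Jet variables: base coordinates `x^i` and jet coordinates `u^a_I`. -/
abbrev JVar (n : ℕ) (F : Type) := Fin n ⊕ (F × Multiset (Fin n))

/-- Local functions. -/
abbrev Loc (n : ℕ) (F : Type) := MvPolynomial (JVar n F) ℝ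

/-- Total derivative `D_i = ∂/∂x^i + Σ_{a,I} u^a_{Ii} ∂/∂u^a_I`. -/
noncomputable def Dtot {n : ℕ} {F : Type} [DecidableEq F]
    (i : Fin n) (f : Loc n F) : Loc n F :=
  pderiv (Sum.inl i) f +
    ∑ v ∈ f.vars,
      match v with
      | Sum.inl _ => 0
      | Sum.inr (a, I) => X (Sum.inr (a, i ::ₘ I)) * pderiv v f

/-- Iterated total derivative `D_I` (the `D_i` commute, so any ordering of the
multi-index gives the same operator). -/
noncomputable def DI {n : ℕ} {F : Type} [DecidableEq F]
    (I : Multiset (Fin n)) (f : Loc n F) : Loc n F :=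
  I.toList.foldr Dtot f

/-- Euler–Lagrange derivative `δf/δu^a = Σ_I (-D)_I (∂f/∂u^a_I)`. -/
noncomputable def EL {n : ℕ} {F : Type} [DecidableEq F]
    (a : F) (f : Loc n F) : Loc n F :=
  ∑ᶠ I : Multiset (Fin n),
    ((-1 : ℝ) ^ Multiset.card I) • DI I (pderiv (Sum.inr (a, I)) f)

/-- Total divergence `D_i R^i`. -/
noncomputable def Divg {n : ℕ} {F : Type} [DecidableEq F]
    (R : Fin n → Loc n F) : Loc n F :=
  ∑ i, Dtot i (R i)

namespace Stmt4Aux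
open MvPolynomial

/-- Derivation formula as a sum over any finset containing the variables. -/
lemma mkDerivation_eq_sum {σ : Type*} [DecidableEq σ] (g : σ → MvPolynomial σ ℝ)
    (f : MvPolynomial σ ℝ) {S : Finset σ} (hS : f.vars ⊆ S) :
    mkDerivation ℝ g f = ∑ v ∈ S, g v * pderiv v f := by
  have key : ∀ (s : σ →₀ ℕ) (r : ℝ), s.support ⊆ S →
      mkDerivation ℝ g (monomial s r) = ∑ v ∈ S, g v * pderiv v (monomial s r) := by
    intro s r hs
    rw [mkDerivation_monomial, Finsupp.sum, Finset.smul_sum,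
        Finset.sum_subset hs (by
          intro v _ hv
          rw [Finsupp.notMem_support_iff] at hv
          simp [hv])]
    refine Finset.sum_congr rfl fun v _ => ?_
    rw [pderiv_monomial, smul_eq_mul, smul_eq_C_mul, ← C_mul_monomial]
    ring
  calc mkDerivation ℝ g f
      = ∑ s ∈ f.support, mkDerivation ℝ g (monomial s (coeff s f)) := by
        conv_lhs => rw [f.as_sum]
        rw [map_sum]
    _ = ∑ s ∈ f.support, ∑ v ∈ S, g v * pderiv v (monomial s (coeff s f)) := by
        refine Finset.sum_congr rfl fun s hsupp => key s _ fun v hv => ?_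
        exact hS ((mem_vars v).mpr ⟨s, hsupp, hv⟩)
    _ = ∑ v ∈ S, g v * pderiv v f := by
        rw [Finset.sum_comm]
        refine Finset.sum_congr rfl fun v _ => ?_
        rw [← Finset.mul_sum, ← map_sum, ← f.as_sum]

variable {n : ℕ} {F : Type} [DecidableEq F]

/-- The values of the total derivative on the variables. -/
noncomputable def gfun (i : Fin n) : JVar n F → Loc n F
  | Sum.inl j => if j = i then 1 else 0
  | Sum.inr (a, I) => X (Sum.inr (a, i ::ₘ I))

/-- The total derivative as a `Derivation`. -/
noncomputable def Dder (i : Fin n) : Derivation ℝ (Loc n F) (Loc n F) :=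
  mkDerivation ℝ (gfun i)

lemma Dtot_eq (i : Fin n) (f : Loc n F) : Dtot i f = Dder i f := by
  rw [Dder, mkDerivation_eq_sum (gfun i) f (subset_refl f.vars), Dtot]
  have h : ∀ v ∈ f.vars, gfun (F := F) i v * pderiv v f =
      (match v with
       | Sum.inl _ => 0
       | Sum.inr (a, I) => X (Sum.inr (a, i ::ₘ I)) * pderiv v f)
      + (if v = Sum.inl i then pderiv v f else 0) := by
    intro v _
    cases v with
    | inl j =>
      by_cases hj : j = i <;> simp [gfun, hj]
    | inr p => simp [gfun]
  rw [Finset.sum_congr rfl h, Finset.sum_add_distrib]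
  have h2 : (∑ v ∈ f.vars, if v = Sum.inl i then pderiv v f else 0)
      = pderiv ((Sum.inl i : JVar n F)) f := by
    rw [Finset.sum_ite_eq' f.vars (Sum.inl i) (fun v => pderiv v f)]
    split_ifs with hmem
    · rfl
    · exact (pderiv_eq_zero_of_notMem_vars hmem).symm
  rw [h2, add_comm]

lemma Dder_X (i : Fin n) (v : JVar n F) : Dder i (X v) = gfun i v :=
  mkDerivation_X ℝ (gfun i) v

lemma Dder_comm (i j : Fin n) :
    ⁅(Dder i : Derivation ℝ (Loc n F) (Loc n F)), (Dder j : Derivation ℝ (Loc n F) (Loc n F))⁆ = 0 := by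
  apply derivation_ext
  intro v
  rw [Derivation.commutator_apply]
  cases v with
  | inl l =>
    simp only [Dder_X, gfun, Derivation.zero_apply]
    split_ifs <;> simp [Derivation.map_one_eq_zero]
  | inr p =>
    obtain ⟨b, J⟩ := p
    simp only [Dder_X, gfun, Derivation.zero_apply, Multiset.cons_swap i j J, sub_self]

lemma Dtot_comm (i j : Fin n) (f : Loc n F) :
    Dtot i (Dtot j f) = Dtot j (Dtot i f) := by
  simp only [Dtot_eq]
  have := congrArg (fun D : Derivation ℝ (Loc n F) (Loc n F) => D f) (Dder_comm i j)
  simpa [Derivation.commutator_apply, sub_eq_zero] using this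

instance : LeftCommutative (Dtot (n := n) (F := F)) := ⟨fun i j f => Dtot_comm i j f⟩

lemma DI_zero' (f : Loc n F) : DI 0 f = f := by
  rw [DI, Multiset.toList_zero, List.foldr_nil]

lemma DI_cons (i : Fin n) (I : Multiset (Fin n)) (f : Loc n F) :
    DI (i ::ₘ I) f = Dtot i (DI I f) := by
  have hperm : ((i ::ₘ I).toList).Perm (i :: I.toList) := by
    rw [← Multiset.coe_eq_coe, Multiset.coe_toList]
    change i ::ₘ I = i ::ₘ (I.toList : Multiset (Fin n))
    rw [Multiset.coe_toList]
  rw [DI, hperm.foldr_eq, List.foldr_cons]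
  rfl

lemma Dtot_DI (I : Multiset (Fin n)) (i : Fin n) (f : Loc n F) :
    DI I (Dtot i f) = Dtot i (DI I f) := by
  induction I using Multiset.induction_on with
  | empty => rw [DI_zero', DI_zero']
  | cons j I ih => rw [DI_cons, DI_cons, ih, Dtot_comm]

lemma Dtot_zero (i : Fin n) : Dtot i (0 : Loc n F) = 0 := by
  rw [Dtot_eq]; exact (Dder i).map_zero

lemma Dtot_add (i : Fin n) (f g : Loc n F) : Dtot i (f + g) = Dtot i f + Dtot i g := by
  simp only [Dtot_eq]; exact (Dder i).map_add f g

lemma DI_zero (I : Multiset (Fin n)) : DI I (0 : Loc n F) = 0 := by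
  induction I using Multiset.induction_on with
  | empty => rw [DI_zero']
  | cons j I ih => rw [DI_cons, ih, Dtot_zero]

lemma DI_add (I : Multiset (Fin n)) (f g : Loc n F) :
    DI I (f + g) = DI I f + DI I g := by
  induction I using Multiset.induction_on with
  | empty => simp only [DI_zero']
  | cons j I ih => rw [DI_cons, ih, Dtot_add, DI_cons, DI_cons]

lemma pderiv_bracket (c : F) (I : Multiset (Fin n)) (i : Fin n) :
    ⁅(pderiv (Sum.inr (c, I)) : Derivation ℝ (Loc n F) (Loc n F)),
      (Dder i : Derivation ℝ (Loc n F) (Loc n F))⁆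
    = if i ∈ I then (pderiv (Sum.inr (c, I.erase i)) : Derivation ℝ (Loc n F) (Loc n F))
      else 0 := by
  apply derivation_ext
  intro v
  rw [Derivation.commutator_apply]
  cases v with
  | inl l =>
    have e1 : (Dder i) (X (Sum.inl l) : Loc n F) = gfun i (Sum.inl l) := Dder_X i _
    have e2 : (pderiv (Sum.inr (c, I))) (gfun (F := F) i (Sum.inl l)) = 0 := by
      show (pderiv (Sum.inr (c, I))) (if l = i then (1 : Loc n F) else 0) = 0
      split_ifs <;> simp [Derivation.map_one_eq_zero]
    have e3 : (pderiv (Sum.inr (c, I))) (X (Sum.inl l) : Loc n F) = 0 :=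
      pderiv_X_of_ne (by simp)
    rw [e1, e2, e3, (Dder i).map_zero, sub_zero]
    split_ifs <;> simp
  | inr p =>
    obtain ⟨b, J⟩ := p
    have e1 : (Dder i) (X (Sum.inr (b, J)) : Loc n F) = X (Sum.inr (b, i ::ₘ J)) :=
      Dder_X i _
    have e2 : (pderiv (Sum.inr (c, I))) (X (Sum.inr (b, i ::ₘ J)) : Loc n F) =
        if (Sum.inr (b, i ::ₘ J) : JVar n F) = Sum.inr (c, I) then 1 else 0 := by
      rw [pderiv_X, Pi.single_apply]
    have e3 : (Dder i) ((pderiv (Sum.inr (c, I))) (X (Sum.inr (b, J)) : Loc n F)) = 0 := by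
      rw [pderiv_X, Pi.single_apply]
      split_ifs
      · exact (Dder i).map_one_eq_zero
      · exact (Dder i).map_zero
    rw [e1, e2, e3, sub_zero]
    by_cases hi : i ∈ I
    · rw [if_pos hi, pderiv_X, Pi.single_apply]
      refine if_congr ?_ rfl rfl
      simp only [Sum.inr.injEq, Prod.mk.injEq]
      constructor
      · rintro ⟨rfl, h⟩
        refine ⟨rfl, ?_⟩
        rw [← h, Multiset.erase_cons_head]
      · rintro ⟨rfl, rfl⟩
        exact ⟨rfl, Multiset.cons_erase hi⟩
    · rw [if_neg hi, Derivation.zero_apply, if_neg]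
      intro h
      simp only [Sum.inr.injEq, Prod.mk.injEq] at h
      exact hi (h.2 ▸ Multiset.mem_cons_self i J)

lemma pderiv_Dtot (c : F) (I : Multiset (Fin n)) (i : Fin n) (f : Loc n F) :
    pderiv (Sum.inr (c, I)) (Dtot i f)
      = Dtot i (pderiv (Sum.inr (c, I)) f)
        + if i ∈ I then pderiv (Sum.inr (c, I.erase i)) f else 0 := by
  have h := congrArg (fun D : Derivation ℝ (Loc n F) (Loc n F) => D f) (pderiv_bracket c I i)
  simp only [Derivation.commutator_apply] at h
  have h2 : ((if i ∈ I then (pderiv (Sum.inr (c, I.erase i)) :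
        Derivation ℝ (Loc n F) (Loc n F)) else 0) f)
      = if i ∈ I then pderiv (Sum.inr (c, I.erase i)) f else 0 := by
    split_ifs <;> simp [Derivation.zero_apply]
  rw [Dtot_eq, Dtot_eq, ← h2, ← h]
  ring

/-- An overapproximation of the multi-indices occurring in `f`. -/
noncomputable def Sfin (f : Loc n F) : Finset (Multiset (Fin n)) :=
  f.vars.image (fun v => match v with | Sum.inr (_, I) => I | Sum.inl _ => 0)

lemma mem_Sfin {c : F} {f : Loc n F} {I : Multiset (Fin n)}
    (h : pderiv (Sum.inr (c, I)) f ≠ 0) : I ∈ Sfin f := by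
  have hv : (Sum.inr (c, I) : JVar n F) ∈ f.vars := by
    by_contra hv
    exact h (pderiv_eq_zero_of_notMem_vars hv)
  exact Finset.mem_image.mpr ⟨Sum.inr (c, I), hv, rfl⟩

lemma EL_eq_sum (c : F) (f : Loc n F) {S : Finset (Multiset (Fin n))}
    (hS : ∀ I, pderiv (Sum.inr (c, I)) f ≠ 0 → I ∈ S) :
    EL c f = ∑ I ∈ S, ((-1 : ℝ) ^ Multiset.card I) • DI I (pderiv (Sum.inr (c, I)) f) := by
  apply finsum_eq_finset_sum_of_support_subset
  intro I hI
  simp only [Function.mem_support] at hI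
  by_contra hmem
  apply hI
  have : pderiv (Sum.inr (c, I)) f = 0 := by
    by_contra hp
    exact hmem (Finset.mem_coe.mpr (hS I hp))
  rw [this, DI_zero, smul_zero]

lemma EL_zero (c : F) : EL c (0 : Loc n F) = 0 := by
  rw [EL_eq_sum c 0 (S := ∅) (fun I hI => absurd (map_zero _) hI), Finset.sum_empty]

lemma EL_add (c : F) (f g : Loc n F) : EL c (f + g) = EL c f + EL c g := by
  rw [EL_eq_sum c f (S := Sfin f ∪ Sfin g) (fun I hI => Finset.mem_union_left _ (mem_Sfin hI)),
      EL_eq_sum c g (S := Sfin f ∪ Sfin g) (fun I hI => Finset.mem_union_right _ (mem_Sfin hI)),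
      EL_eq_sum c (f + g) (S := Sfin f ∪ Sfin g) (fun I hI => ?_), ← Finset.sum_add_distrib]
  · refine Finset.sum_congr rfl fun I _ => ?_
    rw [map_add, DI_add, smul_add]
  · by_cases hf : pderiv (Sum.inr (c, I)) f ≠ 0
    · exact Finset.mem_union_left _ (mem_Sfin hf)
    · refine Finset.mem_union_right _ (mem_Sfin (c := c) ?_)
      rw [not_not] at hf
      intro hg
      exact hI (by rw [map_add, hf, hg, add_zero])

lemma EL_Dtot (c : F) (i : Fin n) (f : Loc n F) : EL c (Dtot i f) = 0 := by
  classical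
  set S0 : Finset (Multiset (Fin n)) := Sfin f ∪ Sfin (Dtot i f) with hS0
  set S : Finset (Multiset (Fin n)) := S0 ∪ S0.image (i ::ₘ ·) with hS
  have hfS0 : Sfin f ⊆ S0 := Finset.subset_union_left
  have hS0S : S0 ⊆ S := Finset.subset_union_left
  have hsub : ∀ I, pderiv (Sum.inr (c, I)) (Dtot i f) ≠ 0 → I ∈ S := fun I hI =>
    hS0S (Finset.mem_union_right _ (mem_Sfin hI))
  set b : Multiset (Fin n) → Loc n F := fun I =>
    ((-1 : ℝ) ^ Multiset.card I) • DI (i ::ₘ I) (pderiv (Sum.inr (c, I)) f) with hb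
  have hbz : ∀ I, I ∉ Sfin f → b I = 0 := by
    intro I hI
    have : pderiv (Sum.inr (c, I)) f = 0 := by
      by_contra hp; exact hI (mem_Sfin hp)
    rw [hb]; dsimp only; rw [this, DI_zero, smul_zero]
  have hterm : ∀ I ∈ S,
      ((-1 : ℝ) ^ Multiset.card I) • DI I (pderiv (Sum.inr (c, I)) (Dtot i f))
      = b I + (if i ∈ I then
          ((-1 : ℝ) ^ Multiset.card I) • DI I (pderiv (Sum.inr (c, I.erase i)) f) else 0) := by
    intro I _
    rw [pderiv_Dtot, DI_add, smul_add]
    congr 1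
    · rw [Dtot_DI, ← DI_cons]
    · split_ifs with hi
      · rfl
      · rw [DI_zero, smul_zero]
  rw [EL_eq_sum c _ hsub, Finset.sum_congr rfl hterm, Finset.sum_add_distrib]
  have h1 : ∑ I ∈ S, b I = ∑ I ∈ Sfin f, b I :=
    (Finset.sum_subset (hfS0.trans hS0S) (fun I _ hI => hbz I hI)).symm
  set T : Finset (Multiset (Fin n)) := S.filter (i ∈ ·) with hT
  have h2 : ∑ I ∈ S, (if i ∈ I then
      ((-1 : ℝ) ^ Multiset.card I) • DI I (pderiv (Sum.inr (c, I.erase i)) f) else 0)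
      = - ∑ I ∈ Sfin f, b I := by
    rw [← Finset.sum_filter]
    have hinj : ∀ x ∈ T, ∀ y ∈ T, x.erase i = y.erase i → x = y := by
      intro x hx y hy hxy
      have hix : i ∈ x := (Finset.mem_filter.mp hx).2
      have hiy : i ∈ y := (Finset.mem_filter.mp hy).2
      rw [← Multiset.cons_erase hix, ← Multiset.cons_erase hiy, hxy]
    have step1 : ∑ I ∈ T, ((-1 : ℝ) ^ Multiset.card I) •
        DI I (pderiv (Sum.inr (c, I.erase i)) f) = ∑ I ∈ T, -(b (I.erase i)) := by
      refine Finset.sum_congr rfl fun I hI => ?_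
      have hiI : i ∈ I := (Finset.mem_filter.mp hI).2
      rw [hb]; dsimp only
      rw [← neg_smul]
      have hc : Multiset.card I = Multiset.card (I.erase i) + 1 := by
        conv_lhs => rw [← Multiset.cons_erase hiI]
        rw [Multiset.card_cons]
      congr 1
      · rw [hc, pow_succ]; ring
      · rw [Multiset.cons_erase hiI]
    have step2 : ∑ I ∈ T, -(b (I.erase i)) = ∑ J ∈ T.image (·.erase i), -(b J) :=
      (Finset.sum_image (f := fun J => -(b J)) hinj).symm
    have himg : Sfin f ⊆ T.image (·.erase i) := by
      intro J hJ
      refine Finset.mem_image.mpr ⟨i ::ₘ J, ?_, Multiset.erase_cons_head i J⟩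
      refine Finset.mem_filter.mpr ⟨?_, Multiset.mem_cons_self i J⟩
      exact Finset.mem_union_right _ (Finset.mem_image_of_mem _ (hfS0 hJ))
    have step3 : ∑ J ∈ T.image (·.erase i), -(b J) = ∑ J ∈ Sfin f, -(b J) :=
      (Finset.sum_subset himg (fun J _ hJ => by rw [hbz J hJ, neg_zero])).symm
    rw [step1, step2, step3, ← Finset.sum_neg_distrib]
  rw [h1, h2, add_neg_cancel]

lemma EL_sum (c : F) {ι : Type*} (s : Finset ι) (h : ι → Loc n F) :
    EL c (∑ j ∈ s, h j) = ∑ j ∈ s, EL c (h j) := by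
  induction s using Finset.cons_induction with
  | empty => simpa using EL_zero c
  | cons j s hj ih => rw [Finset.sum_cons, Finset.sum_cons, EL_add, ih]

end Stmt4Aux

theorem stmt4 (n k : ℕ) (R : Fin n → Loc n (Fin k)) (a : Fin k) :
    EL a (Divg R) = 0 := by
  rw [Divg, Stmt4Aux.EL_sum]
  exact Finset.sum_eq_zero fun i _ => Stmt4Aux.EL_Dtot a i (R i)
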